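/- Let n ≥ 2 be an integer and let u : ℝⁿ → ℝ be a convex C² function with |∇u(x)| < 1 for all x ∈ ℝⁿ satisfying the translating soliton equation Δu(x) + D²u(x)(∇u(x), ∇u(x))/(1 − |∇u(x)|²) = 1 for all x ∈ ℝⁿ. Then the blowdown V_u(x) = lim_{ρ→∞} u(ρx)/ρ satisfies the null condition: for every x ∈ ℝⁿ and every δ > 0 there exists y ∈ ℝⁿ such that |V_u(x) − V_u(y)| = |x − y| = δ. -/

import Mathlib

open Set Filter Topology Metric

noncomputable section

variable {n : ℕ}

local notation "E" => EuclideanSpace ℝ (Fin n)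

open scoped RealInnerProductSpace

lemma grad_inner (u : E → ℝ) (p w : E) : ⟪gradient u p, w⟫ = fderiv ℝ u p w :=
  InnerProductSpace.toDual_symm_apply

lemma grad_norm (u : E → ℝ) (p : E) : ‖gradient u p‖ = ‖fderiv ℝ u p‖ :=
  LinearIsometryEquiv.norm_map _ _

lemma line_hasDerivAt (u : E → ℝ) (hC2 : ContDiff ℝ 2 u) (q v : E) (t : ℝ) :
    HasDerivAt (fun s : ℝ => u (q + s • v)) (fderiv ℝ u (q + t • v) v) t := by
  have hline : HasDerivAt (fun s : ℝ => q + s • v) v t := by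
    simpa using ((hasDerivAt_id t).smul_const v).const_add q
  have hd : DifferentiableAt ℝ u (q + t • v) :=
    (hC2.differentiable (by norm_num)).differentiableAt
  exact hd.hasFDerivAt.comp_hasDerivAt t hline

lemma fderiv_u_diff (u : E → ℝ) (hC2 : ContDiff ℝ 2 u) :
    Differentiable ℝ (fderiv ℝ u) :=
  (hC2.fderiv_right (m := 1) (by norm_num)).differentiable (by norm_num)

lemma line2_hasDerivAt (u : E → ℝ) (hC2 : ContDiff ℝ 2 u) (q v : E) (t : ℝ) :
    HasDerivAt (fun s : ℝ => fderiv ℝ u (q + s • v) v)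
      (fderiv ℝ (fderiv ℝ u) (q + t • v) v v) t := by
  have hline : HasDerivAt (fun s : ℝ => q + s • v) v t := by
    simpa using ((hasDerivAt_id t).smul_const v).const_add q
  have h1 : HasDerivAt (fun s : ℝ => fderiv ℝ u (q + s • v))
      (fderiv ℝ (fderiv ℝ u) (q + t • v) v) t :=
    ((fderiv_u_diff u hC2) (q + t • v)).hasFDerivAt.comp_hasDerivAt t hline
  simpa using h1.clm_apply (hasDerivAt_const t v)

end
noncomputable section
variable {n : ℕ}
local notation "E" => EuclideanSpace ℝ (Fin n)
open scoped RealInnerProductSpace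

lemma line_convex (u : E → ℝ) (hconv : ConvexOn ℝ Set.univ u) (q v : E) :
    ConvexOn ℝ Set.univ (fun s : ℝ => u (q + s • v)) := by
  have h := hconv.comp_affineMap (AffineMap.lineMap q (q + v))
  have : (fun s : ℝ => u (q + s • v)) = u ∘ (AffineMap.lineMap q (q + v)) := by
    funext s
    simp [AffineMap.lineMap_apply]
    rw [add_comm]
  rw [this]
  simpa using h

lemma subgrad (u : E → ℝ) (hconv : ConvexOn ℝ Set.univ u) (hC2 : ContDiff ℝ 2 u) (p z : E) :
    u p + ⟪gradient u p, z - p⟫ ≤ u z := by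
  set g : ℝ → ℝ := fun s => u (p + s • (z - p)) with hg
  have hgc : ConvexOn ℝ Set.univ g := line_convex u hconv p (z - p)
  have hd : ∀ t, HasDerivAt g (fderiv ℝ u (p + t • (z - p)) (z - p)) t :=
    fun t => line_hasDerivAt u hC2 p (z - p) t
  have h1 : deriv g 0 ≤ slope g 0 1 :=
    hgc.deriv_le_slope (Set.mem_univ _) (Set.mem_univ _) zero_lt_one (hd 0).differentiableAt
  have h2 : deriv g 0 = fderiv ℝ u p (z - p) := by
    have := (hd 0).deriv
    simpa using this
  have h3 : slope g 0 1 = u z - u p := by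
    rw [slope_def_field]
    simp [hg]
  rw [grad_inner]
  rw [h2, h3] at h1
  linarith

lemma lip (u : E → ℝ) (hC2 : ContDiff ℝ 2 u) (hsp : ∀ x : E, ‖gradient u x‖ < 1) (a b : E) :
    u a - u b ≤ ‖a - b‖ := by
  have h := Convex.norm_image_sub_le_of_norm_fderiv_le
    (f := u) (C := 1) (s := (Set.univ : Set E))
    (fun x _ => (hC2.differentiable (by norm_num)).differentiableAt)
    (fun x _ => by rw [← grad_norm]; exact (hsp x).le)
    convex_univ (Set.mem_univ b) (Set.mem_univ a)
  calc u a - u b ≤ |u a - u b| := le_abs_self _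
  _ ≤ 1 * ‖a - b‖ := h
  _ = ‖a - b‖ := one_mul _

lemma psd (u : E → ℝ) (hconv : ConvexOn ℝ Set.univ u) (hC2 : ContDiff ℝ 2 u) (q v : E) :
    0 ≤ fderiv ℝ (fderiv ℝ u) q v v := by
  set g : ℝ → ℝ := fun s => u (q + s • v) with hgdef
  set g' : ℝ → ℝ := fun s => fderiv ℝ u (q + s • v) v with hg'def
  have hd : ∀ t, HasDerivAt g (g' t) t := fun t => line_hasDerivAt u hC2 q v t
  have hd2 : HasDerivAt g' (fderiv ℝ (fderiv ℝ u) q v v) 0 := by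
    have := line2_hasDerivAt u hC2 q v 0
    simpa using this
  have hmono : Monotone g' := by
    have h := (line_convex u hconv q v).monotoneOn_deriv
      (fun x _ => (hd x).differentiableAt)
    have hderiv : deriv g = g' := funext fun t => (hd t).deriv
    rw [← hderiv]
    exact monotoneOn_univ.mp h
  -- derivative of a monotone function is nonneg
  have hslope := hasDerivAt_iff_tendsto_slope.mp hd2
  refine ge_of_tendsto hslope ?_
  filter_upwards [self_mem_nhdsWithin] with t ht
  rcases lt_or_gt_of_ne (Set.mem_compl_singleton_iff.mp ht) with h | h
  · rw [slope_def_field, div_nonneg_iff]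
    right
    constructor
    · simpa using hmono h.le
    · linarith
  · rw [slope_def_field, div_nonneg_iff]
    left
    constructor
    · simpa using hmono h.le
    · linarith
end
noncomputable section
variable {n : ℕ}
local notation "E" => EuclideanSpace ℝ (Fin n)
open scoped RealInnerProductSpace

lemma V_zero (u : E → ℝ) (V : E → ℝ) (hV : ∀ x : E, Tendsto (fun ρ : ℝ => u (ρ • x) / ρ) atTop (nhds (V x))) :
    V 0 = 0 := by
  have h0 : Tendsto (fun ρ : ℝ => u (ρ • (0 : E)) / ρ) atTop (nhds 0) := by
    simp only [smul_zero]
    exact Tendsto.div_atTop tendsto_const_nhds tendsto_id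
  exact tendsto_nhds_unique (hV 0) h0

lemma V_lip (u : E → ℝ) (V : E → ℝ) (hC2 : ContDiff ℝ 2 u) (hsp : ∀ x : E, ‖gradient u x‖ < 1)
    (hV : ∀ x : E, Tendsto (fun ρ : ℝ => u (ρ • x) / ρ) atTop (nhds (V x))) (a b : E) :
    V a ≤ V b + ‖a - b‖ := by
  refine le_of_tendsto_of_tendsto (hV a) ((hV b).add tendsto_const_nhds) ?_
  filter_upwards [eventually_gt_atTop (0 : ℝ)] with ρ hρ
  have h := lip u hC2 hsp (ρ • a) (ρ • b)
  have : ‖ρ • a - ρ • b‖ = ρ * ‖a - b‖ := by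
    rw [← smul_sub, norm_smul, Real.norm_eq_abs, abs_of_pos hρ]
  rw [this] at h
  show u (ρ • a) / ρ ≤ u (ρ • b) / ρ + ‖a - b‖
  rw [div_add' _ _ _ hρ.ne', div_le_div_iff_of_pos_right hρ]
  linarith

lemma V_le_norm (u : E → ℝ) (V : E → ℝ) (hC2 : ContDiff ℝ 2 u) (hsp : ∀ x : E, ‖gradient u x‖ < 1)
    (hV : ∀ x : E, Tendsto (fun ρ : ℝ => u (ρ • x) / ρ) atTop (nhds (V x))) (a : E) :
    V a ≤ ‖a‖ := by
  have := V_lip u V hC2 hsp hV a 0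
  rw [V_zero u V hV] at this
  simpa using this

lemma P_grad (u : E → ℝ) (V : E → ℝ) (hconv : ConvexOn ℝ Set.univ u) (hC2 : ContDiff ℝ 2 u)
    (hV : ∀ x : E, Tendsto (fun ρ : ℝ => u (ρ • x) / ρ) atTop (nhds (V x))) (p y : E) :
    ⟪gradient u p, y⟫ ≤ V y := by
  have key : ∀ ρ : ℝ, 0 < ρ → ⟪gradient u p, y⟫ ≤ u (ρ • y) / ρ +
      (⟪gradient u p, p⟫ - u p) / ρ := by
    intro ρ hρ
    have h := subgrad u hconv hC2 p (ρ • y)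
    rw [inner_sub_right, real_inner_smul_right] at h
    rw [← sub_nonneg]
    have : u (ρ • y) / ρ + (⟪gradient u p, p⟫ - u p) / ρ - ⟪gradient u p, y⟫
        = (u (ρ • y) + (⟪gradient u p, p⟫ - u p) - ρ * ⟪gradient u p, y⟫) / ρ := by
      field_simp
    rw [this]
    apply div_nonneg ?_ hρ.le
    linarith
  have htend : Tendsto (fun ρ : ℝ => u (ρ • y) / ρ + (⟪gradient u p, p⟫ - u p) / ρ)
      atTop (nhds (V y + 0)) :=
    (hV y).add (Tendsto.div_atTop tendsto_const_nhds tendsto_id)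
  rw [add_zero] at htend
  refine ge_of_tendsto htend ?_
  filter_upwards [eventually_gt_atTop (0 : ℝ)] with ρ hρ using key ρ hρ

lemma grad_lower (u : E → ℝ) (hconv : ConvexOn ℝ Set.univ u) (hC2 : ContDiff ℝ 2 u) (p : E) :
    u p - u 0 ≤ ⟪gradient u p, p⟫ := by
  have h := subgrad u hconv hC2 p 0
  rw [zero_sub, inner_neg_right] at h
  linarith
end
noncomputable section
variable {n : ℕ}
local notation "E" => EuclideanSpace ℝ (Fin n)
open scoped RealInnerProductSpace

lemma decomp (v : E) : ∑ i, v i • EuclideanSpace.single i (1 : ℝ) = v := by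
  ext j
  have : (∑ i, v i • EuclideanSpace.single i (1 : ℝ) : E) j
      = ∑ i, (v i • EuclideanSpace.single i (1 : ℝ) : E) j := by
    rw [WithLp.ofLp_sum]; exact Finset.sum_apply j Finset.univ _
  rw [this]
  simp [EuclideanSpace.single_apply]

lemma norm_sq_sum (v : E) : ‖v‖ ^ 2 = ∑ i, v i * v i := by
  rw [← real_inner_self_eq_norm_sq]
  rw [PiLp.inner_apply]
  simp [mul_comm, sq]

lemma trace_bound (L : E →L[ℝ] E →L[ℝ] ℝ) (hpsd : ∀ w : E, 0 ≤ L w w) (v : E) :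
    L v v ≤ n * ‖v‖ ^ 2 * ∑ i, L (EuclideanSpace.single i (1 : ℝ)) (EuclideanSpace.single i (1 : ℝ)) := by
  set e : Fin n → E := fun i => EuclideanSpace.single i (1 : ℝ) with he
  have expand : L v v = ∑ i, ∑ j, v i * (v j * L (e i) (e j)) := by
    have h0 : L v v = L (∑ i, v i • e i) (∑ j, v j • e j) := by rw [decomp]
    rw [h0, map_sum]
    refine Eq.trans ?_ (Finset.sum_comm)
    refine Finset.sum_congr rfl fun j _ => ?_
    simp only [map_sum, map_smul, ContinuousLinearMap.sum_apply,
      ContinuousLinearMap.smul_apply, smul_eq_mul, Finset.mul_sum]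
    refine Finset.sum_congr rfl fun i _ => ?_
    ring
  have pair : ∀ i j, v i * (v j * L (e i) (e j)) + v j * (v i * L (e j) (e i)) ≤
      (v i)^2 * L (e i) (e i) + (v j)^2 * L (e j) (e j) := by
    intro i j
    have h := hpsd (v i • e i - v j • e j)
    simp only [map_sub, map_smul, ContinuousLinearMap.sub_apply,
      ContinuousLinearMap.smul_apply, smul_eq_mul] at h
    nlinarith [h]
  set S := ∑ i, (v i)^2 * L (e i) (e i) with hS
  have hdouble : 2 * L v v ≤ 2 * n * S := by
    have hswap : L v v = ∑ i, ∑ j, v j * (v i * L (e j) (e i)) := by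
      rw [expand]; exact Finset.sum_comm
    have step1 : 2 * L v v = ∑ i, ∑ j, (v i * (v j * L (e i) (e j)) + v j * (v i * L (e j) (e i))) := by
      simp only [Finset.sum_add_distrib]
      rw [← expand, ← hswap]; ring
    have step2 : ∑ i, ∑ j, ((v i)^2 * L (e i) (e i) + (v j)^2 * L (e j) (e j)) = 2 * n * S := by
      simp only [Finset.sum_add_distrib, Finset.sum_const, Finset.card_univ, Fintype.card_fin,
        nsmul_eq_mul]
      rw [← Finset.mul_sum, ← hS]
      ring
    rw [step1, ← step2]
    exact Finset.sum_le_sum fun i _ => Finset.sum_le_sum fun j _ => pair i j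
  have hSle : S ≤ ‖v‖ ^ 2 * ∑ i, L (e i) (e i) := by
    rw [norm_sq_sum, Finset.sum_mul]
    refine Finset.sum_le_sum fun i _ => ?_
    have h1 : L (e i) (e i) ≤ ∑ j, L (e j) (e j) :=
      Finset.single_le_sum (fun j _ => hpsd (e j)) (Finset.mem_univ i)
    have h2 : (0:ℝ) ≤ v i * v i := mul_self_nonneg _
    calc (v i)^2 * L (e i) (e i) = (v i * v i) * L (e i) (e i) := by ring
      _ ≤ (v i * v i) * ∑ j, L (e j) (e j) := by
          exact mul_le_mul_of_nonneg_left h1 h2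
  have hnn : (0:ℝ) ≤ (n:ℝ) := Nat.cast_nonneg n
  nlinarith [hdouble, hSle]
end
noncomputable section
variable {n : ℕ}
local notation "E" => EuclideanSpace ℝ (Fin n)
open scoped RealInnerProductSpace

set_option maxHeartbeats 1000000 in
lemma lap_lb (u : E → ℝ) (hn : 1 ≤ n) (hconv : ConvexOn ℝ Set.univ u) (hC2 : ContDiff ℝ 2 u)
    (hsp : ∀ x : E, ‖gradient u x‖ < 1)
    (heq : ∀ x : E,
      (∑ i : Fin n, iteratedFDeriv ℝ 2 u x
          ![EuclideanSpace.single i 1, EuclideanSpace.single i 1]) +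
        iteratedFDeriv ℝ 2 u x ![gradient u x, gradient u x] /
          (1 - ‖gradient u x‖ ^ 2) = 1)
    (ε : ℝ) (hε : 0 < ε) (hε1 : ε ≤ 1) (q : E) (hq : ‖gradient u q‖ ≤ 1 - ε) :
    ε / n ≤ ∑ i, fderiv ℝ (fderiv ℝ u) q
      (EuclideanSpace.single i (1:ℝ)) (EuclideanSpace.single i (1:ℝ)) := by
  set L := fderiv ℝ (fderiv ℝ u) q with hL
  set g := gradient u q with hg
  set T := ∑ i, L (EuclideanSpace.single i (1:ℝ)) (EuclideanSpace.single i (1:ℝ)) with hT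
  set s := ‖g‖ ^ 2 with hs
  have hiter : ∀ a b : E, iteratedFDeriv ℝ 2 u q ![a, b] = L a b := by
    intro a b
    rw [iteratedFDeriv_two_apply]
    simp
    rfl
  have hEq : T + L g g / (1 - s) = 1 := by
    have := heq q
    simp only [hiter] at this
    exact this
  have hpsd : ∀ w : E, 0 ≤ L w w := fun w => psd u hconv hC2 q w
  have hTpos : 0 ≤ T := Finset.sum_nonneg fun i _ => hpsd _
  have hQ : 0 ≤ L g g := hpsd g
  have hQle : L g g ≤ n * s * T := trace_bound L hpsd g
  have hs1 : s ≤ (1 - ε)^2 := by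
    rw [hs]
    have h0 : (0:ℝ) ≤ 1 - ε := by
      nlinarith [norm_nonneg g, hq]
    nlinarith [norm_nonneg g]
  have hspos : 0 < 1 - s := by
    have := hsp q
    rw [hs]
    nlinarith [norm_nonneg g]
  have hsnn : 0 ≤ s := by rw [hs]; positivity
  have hLgg : L g g = (1 - T) * (1 - s) := by
    field_simp at hEq
    linarith
  have hnR : (1:ℝ) ≤ (n:ℝ) := by exact_mod_cast hn
  rw [div_le_iff₀ (by linarith : (0:ℝ) < (n:ℝ))]
  -- want ε ≤ T * n
  have key : (1 - T) * (1 - s) ≤ n * s * T := by rw [← hLgg]; exact hQle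
  nlinarith [mul_nonneg (mul_nonneg (sub_nonneg.mpr hnR) hTpos) (le_of_lt hspos),
    mul_nonneg hTpos hsnn]
end
section
open Metric Set

lemma locmax {g g' g'' : ℝ → ℝ} (h1 : ∀ t, HasDerivAt g (g' t) t)
    (h2 : ∀ t, HasDerivAt g' (g'' t) t) (hcont : Continuous g'')
    (hmax : IsLocalMax g 0) : g'' 0 ≤ 0 := by
  by_contra hpos
  push_neg at hpos
  have hg'0 : g' 0 = 0 := by rw [← (h1 0).deriv]; exact hmax.deriv_eq_zero
  have hev : ∀ᶠ t in 𝓝 (0:ℝ), 0 < g'' t :=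
    (hcont.continuousAt).eventually_const_lt hpos
  obtain ⟨a, ha, hball⟩ := Metric.eventually_nhds_iff.mp hev
  have hcg' : Continuous g' := Differentiable.continuous (fun t => (h2 t).differentiableAt)
  have hcg : Continuous g := Differentiable.continuous (fun t => (h1 t).differentiableAt)
  have hmono : StrictMonoOn g' (Icc 0 (a/2)) := by
    apply strictMonoOn_of_deriv_pos (convex_Icc _ _) hcg'.continuousOn
    intro t ht
    rw [interior_Icc] at ht
    rw [(h2 t).deriv]
    apply hball
    rw [Real.dist_eq, sub_zero, abs_of_pos ht.1]
    linarith [ht.2]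
  have hg'pos : ∀ t ∈ Ioc (0:ℝ) (a/2), 0 < g' t := by
    intro t ht
    have := hmono (Set.left_mem_Icc.mpr (by linarith)) (Set.mem_Icc.mpr ⟨ht.1.le, ht.2⟩) ht.1
    rw [hg'0] at this
    exact this
  have hgmono : StrictMonoOn g (Icc 0 (a/2)) := by
    apply strictMonoOn_of_deriv_pos (convex_Icc _ _) hcg.continuousOn
    intro t ht
    rw [interior_Icc] at ht
    rw [(h1 t).deriv]
    exact hg'pos t ⟨ht.1, ht.2.le⟩
  obtain ⟨r, hr, hball2⟩ := Metric.eventually_nhds_iff.mp hmax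
  set t0 := min (a/2) (r/2) with ht0
  have ht0pos : 0 < t0 := lt_min (by linarith) (by linarith)
  have h1' : g 0 < g t0 :=
    hgmono (Set.left_mem_Icc.mpr (by linarith)) 
      (Set.mem_Icc.mpr ⟨ht0pos.le, min_le_left _ _⟩) ht0pos
  have h2' : g t0 ≤ g 0 := by
    apply hball2
    rw [Real.dist_eq, sub_zero, abs_of_pos ht0pos]
    calc t0 ≤ r/2 := min_le_right _ _
    _ < r := by linarith
  linarith

end
noncomputable section
variable {n : ℕ}
local notation "E" => EuclideanSpace ℝ (Fin n)
open scoped RealInnerProductSpace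
open Metric

set_option maxHeartbeats 1000000 in
lemma ball_bound (u : E → ℝ) (hn : 1 ≤ n) (hconv : ConvexOn ℝ Set.univ u)
    (hC2 : ContDiff ℝ 2 u) (hsp : ∀ x : E, ‖gradient u x‖ < 1)
    (heq : ∀ x : E,
      (∑ i : Fin n, iteratedFDeriv ℝ 2 u x
          ![EuclideanSpace.single i 1, EuclideanSpace.single i 1]) +
        iteratedFDeriv ℝ 2 u x ![gradient u x, gradient u x] /
          (1 - ‖gradient u x‖ ^ 2) = 1)
    (ε : ℝ) (hε : 0 < ε) (hε1 : ε ≤ 1) (p : E) (R : ℝ) (hR : 0 < R)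
    (hgrad : ∀ q ∈ Metric.closedBall p R, ‖gradient u q‖ ≤ 1 - ε) :
    R ≤ 4 * n^2 / ε := by
  have hnR : (1:ℝ) ≤ (n:ℝ) := by exact_mod_cast hn
  set c : ℝ := ε / (4 * n^2) with hc
  have hcpos : 0 < c := by positivity
  set v : E → ℝ := fun q => u q - c * ‖q - p‖^2 with hv
  have hcu : Continuous u := hC2.continuous
  have hcv : Continuous v :=
    hcu.sub (continuous_const.mul ((continuous_id.sub continuous_const).norm.pow 2))
  obtain ⟨qs, hqsmem, hqsmax⟩ := (isCompact_closedBall p R).exists_isMaxOn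
    ⟨p, mem_closedBall_self hR.le⟩ hcv.continuousOn
  have hqsd : ‖qs - p‖ ≤ R := by rwa [mem_closedBall, dist_eq_norm] at hqsmem
  by_cases hb : ‖qs - p‖ < R
  · -- interior case: contradiction
    exfalso
    have hlm : IsLocalMax v qs := hqsmax.isLocalMax
      (Filter.mem_of_superset (isOpen_ball.mem_nhds (by rwa [mem_ball, dist_eq_norm]))
        ball_subset_closedBall)
    -- second derivative in each coordinate direction is ≤ 2c
    have key : ∀ i : Fin n, fderiv ℝ (fderiv ℝ u) qs
        (EuclideanSpace.single i (1:ℝ)) (EuclideanSpace.single i (1:ℝ)) ≤ 2 * c := by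
      intro i
      set e : E := EuclideanSpace.single i (1:ℝ) with he
      have hnorme : ‖e‖ = 1 := by rw [he, EuclideanSpace.norm_single]; norm_num
      set A : ℝ := ‖qs - p‖^2 with hA
      set B : ℝ := 2 * ⟪qs - p, e⟫ with hB
      set g : ℝ → ℝ := fun t => v (qs + t • e) with hg
      have hgfun : g = fun t => u (qs + t • e) - c * (A + B * t + t^2) := by
        funext t
        rw [hg, hv]
        simp only
        congr 1
        have h1 : qs + t • e - p = (qs - p) + t • e := by abel
        have h2 : ‖qs + t • e - p‖^2 = A + B * t + t^2 := by
          rw [h1, norm_add_sq_real, real_inner_smul_right, norm_smul, hnorme, hA, hB]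
          simp only [Real.norm_eq_abs, mul_one]
          rw [sq_abs]
          ring
        rw [h2]
      set g' : ℝ → ℝ := fun t => fderiv ℝ u (qs + t • e) e - c * (B + 2 * t) with hg'
      set g'' : ℝ → ℝ := fun t => fderiv ℝ (fderiv ℝ u) (qs + t • e) e e - c * 2 with hg''
      have h1 : ∀ t, HasDerivAt g (g' t) t := by
        intro t
        rw [hgfun]
        refine HasDerivAt.sub (line_hasDerivAt u hC2 qs e t) ?_
        have hpoly : HasDerivAt (fun t : ℝ => A + B * t + t^2) (B + 2 * t) t := by
          have := (((hasDerivAt_id t).const_mul B).const_add A).add (hasDerivAt_pow 2 t)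
          simpa [Pi.add_def] using this
        simpa using hpoly.const_mul c
      have h2 : ∀ t, HasDerivAt g' (g'' t) t := by
        intro t
        refine HasDerivAt.sub (line2_hasDerivAt u hC2 qs e t) ?_
        have hpoly : HasDerivAt (fun t : ℝ => B + 2 * t) 2 t := by
          simpa using ((hasDerivAt_id t).const_mul 2).const_add B
        simpa using hpoly.const_mul c
      have hcont : Continuous g'' := by
        rw [hg'']
        refine Continuous.sub ?_ continuous_const
        have hff : Continuous (fderiv ℝ (fderiv ℝ u)) :=
          ((hC2.fderiv_right (m := 1) (by norm_num)).fderiv_right (m := 0)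
            (by norm_num)).continuous
        have hline : Continuous (fun t : ℝ => qs + t • e) :=
          continuous_const.add (continuous_id.smul continuous_const)
        exact (((hff.comp hline).clm_apply continuous_const).clm_apply continuous_const)
      have hmax0 : IsLocalMax g 0 := by
        have hφ : ContinuousAt (fun t : ℝ => qs + t • e) 0 :=
          (continuous_const.add (continuous_id.smul continuous_const)).continuousAt
        have hφ0 : (fun t : ℝ => qs + t • e) 0 = qs := by simp
        rw [hg]
        have hlm0 : IsLocalMax v ((fun t : ℝ => qs + t • e) 0) := by
          rwa [hφ0]
        exact IsLocalMax.comp_continuous (f := v) (g := fun t : ℝ => qs + t • e) (b := 0) hlm0 hφ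
      have := locmax h1 h2 hcont hmax0
      have h0 : g'' 0 = fderiv ℝ (fderiv ℝ u) qs e e - c * 2 := by
        rw [hg'']; simp
      rw [h0] at this
      linarith
    have hlap := lap_lb u hn hconv hC2 hsp heq ε hε hε1 qs (hgrad qs hqsmem)
    have hsum : ∑ i : Fin n, fderiv ℝ (fderiv ℝ u) qs
        (EuclideanSpace.single i (1:ℝ)) (EuclideanSpace.single i (1:ℝ))
        ≤ ∑ _i : Fin n, 2 * c := Finset.sum_le_sum fun i _ => key i
    rw [Finset.sum_const, Finset.card_univ, Fintype.card_fin, nsmul_eq_mul] at hsum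
    have hnpos : (0:ℝ) < n := by linarith
    have : ε / n ≤ n * (2 * c) := le_trans hlap hsum
    rw [hc] at this
    rw [div_le_iff₀ hnpos] at this
    have hsimp : (n:ℝ) * (2 * (ε / (4 * (n:ℝ)^2))) * n = ε / 2 := by
      field_simp
      ring
    rw [hsimp] at this
    linarith
  · -- boundary case
    push_neg at hb
    have hbeq : ‖qs - p‖ = R := le_antisymm hqsd hb
    have hmax : v p ≤ v qs := hqsmax (mem_closedBall_self hR.le)
    have hvp : v p = u p := by rw [hv]; simp
    have hvqs : v qs = u qs - c * R^2 := by
      rw [hv]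
      simp only
      rw [hbeq]
    have hlip := lip u hC2 hsp qs p
    rw [hvp, hvqs] at hmax
    have : c * R^2 ≤ R := by rw [hbeq] at hlip; linarith
    have hR1 : c * R ≤ 1 := by
      by_contra hcon
      push_neg at hcon
      nlinarith
    rw [hc] at hR1
    rw [le_div_iff₀ hε]
    have h2n : (0:ℝ) < 4 * (n:ℝ)^2 := by positivity
    rw [div_mul_eq_mul_div, div_le_one h2n] at hR1
    linarith
end
section
open Metric
open scoped RealInnerProductSpace

set_option maxHeartbeats 1000000 in
theorem stmt_12 (n : ℕ) (hn : 2 ≤ n) (u : EuclideanSpace ℝ (Fin n) → ℝ)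
    (hconv : ConvexOn ℝ Set.univ u)
    (hC2 : ContDiff ℝ 2 u)
    (hsp : ∀ x, ‖gradient u x‖ < 1)
    (heq : ∀ x : EuclideanSpace ℝ (Fin n),
      (∑ i : Fin n, iteratedFDeriv ℝ 2 u x
          ![EuclideanSpace.single i 1, EuclideanSpace.single i 1]) +
        iteratedFDeriv ℝ 2 u x ![gradient u x, gradient u x] /
          (1 - ‖gradient u x‖ ^ 2) = 1)
    (V : EuclideanSpace ℝ (Fin n) → ℝ)
    (hV : ∀ x, Filter.Tendsto (fun ρ : ℝ => u (ρ • x) / ρ) Filter.atTop (nhds (V x))) :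
    ∀ x : EuclideanSpace ℝ (Fin n), ∀ δ : ℝ, 0 < δ →
      ∃ y : EuclideanSpace ℝ (Fin n), |V x - V y| = ‖x - y‖ ∧ ‖x - y‖ = δ := by
  intro x δ hδ
  have hn1 : 1 ≤ n := le_trans (by norm_num) hn
  have hn0 : 0 < n := hn1
  have hnormle : ∀ ξ : EuclideanSpace ℝ (Fin n), (∀ y, ⟪ξ, y⟫ ≤ V y) → ‖ξ‖ ≤ 1 := by
    intro ξ hP
    have h1 : ⟪ξ, ξ⟫ ≤ V ξ := hP ξ
    have h2 : V ξ ≤ ‖ξ‖ := V_le_norm u V hC2 hsp hV ξ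
    have h3 : ‖ξ‖^2 ≤ ‖ξ‖ := by rw [← real_inner_self_eq_norm_sq]; linarith
    nlinarith [norm_nonneg ξ]
  have H : ∃ ξ : EuclideanSpace ℝ (Fin n),
      (∀ y, ⟪ξ, y⟫ ≤ V y) ∧ ⟪ξ, x⟫ = V x ∧ ‖ξ‖ = 1 := by
    by_contra Hneg
    push_neg at Hneg
    -- Step 1: a uniform gap below norm one for approximate maximizers
    have claim : ∃ ε : ℝ, 0 < ε ∧ ε ≤ 1 ∧ ∃ η : ℝ, 0 < η ∧
        ∀ ξ : EuclideanSpace ℝ (Fin n), (∀ y, ⟪ξ, y⟫ ≤ V y) →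
          V x - η ≤ ⟪ξ, x⟫ → ‖ξ‖ ≤ 1 - ε := by
      by_contra hc
      push_neg at hc
      have hc' : ∀ k : ℕ, ∃ ξ : EuclideanSpace ℝ (Fin n),
          (∀ y, ⟪ξ, y⟫ ≤ V y) ∧ V x - 1/((k:ℝ)+1) ≤ ⟪ξ, x⟫ ∧ 1 - 1/((k:ℝ)+1) < ‖ξ‖ := by
        intro k
        have h1 : (0:ℝ) < 1/((k:ℝ)+1) := by positivity
        have h2 : 1/((k:ℝ)+1) ≤ 1 := by
          rw [div_le_one (by positivity)]
          linarith [Nat.cast_nonneg (α := ℝ) k]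
        obtain ⟨ξ, hP, hin, hnrm⟩ := hc (1/((k:ℝ)+1)) h1 h2 (1/((k:ℝ)+1)) h1
        exact ⟨ξ, hP, hin, hnrm⟩
      choose ξs hs using hc'
      have hmem : ∀ k, ξs k ∈ closedBall (0 : EuclideanSpace ℝ (Fin n)) 1 := by
        intro k
        rw [mem_closedBall, dist_eq_norm, sub_zero]
        exact hnormle (ξs k) (hs k).1
      obtain ⟨ξ, hξmem, φ, hφmono, hφtend⟩ :=
        (isCompact_closedBall (0 : EuclideanSpace ℝ (Fin n)) 1).tendsto_subseq hmem
      have hinv0 : Filter.Tendsto (fun k : ℕ => 1/((φ k : ℝ)+1)) atTop (nhds 0) := by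
        apply squeeze_zero (fun k => by positivity) (g := fun k : ℕ => 1/((k:ℝ)+1))
        · intro k
          apply div_le_div_of_nonneg_left (by norm_num) (by positivity)
          have hk : (k:ℝ) ≤ (φ k : ℝ) := by exact_mod_cast hφmono.le_apply
          linarith
        · exact tendsto_one_div_add_atTop_nhds_zero_nat
      have hPξ : ∀ y, ⟪ξ, y⟫ ≤ V y := by
        intro y
        have htend : Filter.Tendsto (fun k => ⟪ξs (φ k), y⟫) atTop (nhds ⟪ξ, y⟫) :=
          Filter.Tendsto.inner hφtend tendsto_const_nhds
        exact le_of_tendsto htend (Filter.Eventually.of_forall fun k => (hs (φ k)).1 y)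
      have hxξ : ⟪ξ, x⟫ = V x := by
        have htend : Filter.Tendsto (fun k => ⟪ξs (φ k), x⟫) atTop (nhds ⟪ξ, x⟫) :=
          Filter.Tendsto.inner hφtend tendsto_const_nhds
        have hlim : Filter.Tendsto (fun k : ℕ => V x - 1/((φ k:ℝ)+1)) atTop (nhds (V x - 0)) :=
          tendsto_const_nhds.sub hinv0
        rw [sub_zero] at hlim
        have hge : V x ≤ ⟪ξ, x⟫ := le_of_tendsto_of_tendsto hlim htend
          (Filter.Eventually.of_forall fun k => (hs (φ k)).2.1)
        exact le_antisymm (hPξ x) hge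
      have hnξ : ‖ξ‖ = 1 := by
        have htendn : Filter.Tendsto (fun k => ‖ξs (φ k)‖) atTop (nhds ‖ξ‖) := hφtend.norm
        have hlim : Filter.Tendsto (fun k : ℕ => 1 - 1/((φ k:ℝ)+1)) atTop (nhds (1 - 0)) :=
          tendsto_const_nhds.sub hinv0
        rw [sub_zero] at hlim
        have hge : 1 ≤ ‖ξ‖ := le_of_tendsto_of_tendsto hlim htendn
          (Filter.Eventually.of_forall fun k => ((hs (φ k)).2.2).le)
        exact le_antisymm (hnormle ξ hPξ) hge
      exact Hneg ξ hPξ hxξ hnξ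
    obtain ⟨ε, hε, hε1, η, hη, hclaim⟩ := claim
    -- Step 2: gradient bound on a far-away ball, contradiction with ball_bound
    set ρ : ℝ := η / 3 with hρdef
    have hρ : 0 < ρ := by positivity
    set R : ℝ := 4 * n^2 / ε + 1 with hRdef
    have hR : 0 < R := by positivity
    set e₀ : EuclideanSpace ℝ (Fin n) := EuclideanSpace.single (⟨0, hn0⟩ : Fin n) (1:ℝ) with he₀
    have hne₀ : ‖e₀‖ = 1 := by rw [he₀, EuclideanSpace.norm_single]; norm_num
    -- eventual lower bound for (u (t • x) - u 0)/t
    have hE1 : ∀ᶠ t : ℝ in atTop, V x - ρ < (u (t • x) - u 0)/t := by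
      have h1 : Filter.Tendsto (fun t : ℝ => (u (t • x) - u 0)/t) atTop (nhds (V x - 0)) := by
        have := (hV x).sub (Tendsto.div_atTop (tendsto_const_nhds (x := u 0)) tendsto_id)
        refine this.congr fun t => ?_
        exact (sub_div _ _ _).symm
      rw [sub_zero] at h1
      exact h1.eventually_const_lt (by linarith)
    obtain ⟨t, ht1, ht2⟩ := (hE1.and (eventually_ge_atTop (max 1 (2*R/ρ)))).exists
    have ht1' := ht1.le
    have htpos : (0:ℝ) < t := lt_of_lt_of_le one_pos (le_trans (le_max_left _ _) ht2)
    have htR : 2*R/ρ ≤ t := le_trans (le_max_right _ _) ht2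
    have htRρ : R / t ≤ ρ / 2 := by
      rw [div_le_div_iff₀ htpos (by norm_num : (0:ℝ) < 2)]
      rw [div_le_iff₀ hρ] at htR
      linarith
    set p : EuclideanSpace ℝ (Fin n) := t • x + (t * ρ/2) • e₀ with hpdef
    have hball : ∀ q ∈ closedBall p R, ‖gradient u q‖ ≤ 1 - ε := by
      intro q hq
      have hqd : ‖q - p‖ ≤ R := by rwa [mem_closedBall, dist_eq_norm] at hq
      set x' : EuclideanSpace ℝ (Fin n) := (1/t) • q with hx'def
      have hqx' : q = t • x' := by
        rw [hx'def, smul_smul]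
        rw [mul_one_div, div_self htpos.ne']
        rw [one_smul]
      have hdist : ‖x' - x‖ ≤ ρ := by
        have hsplit : x' - x = (1/t) • (q - p) + (ρ/2) • e₀ := by
          rw [hx'def, hpdef]
          rw [smul_sub, smul_add, smul_smul, smul_smul]
          have h1 : (1/t) * t = 1 := by field_simp
          have h2 : (1/t) * (t * ρ/2) = ρ/2 := by
            field_simp
          rw [h1, h2, one_smul]
          abel
        rw [hsplit]
        calc ‖(1/t) • (q - p) + (ρ/2) • e₀‖ ≤ ‖(1/t) • (q - p)‖ + ‖(ρ/2) • e₀‖ :=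
              norm_add_le _ _
          _ ≤ ρ/2 + ρ/2 := by
              gcongr
              · rw [norm_smul, Real.norm_eq_abs, abs_of_pos (by positivity : (0:ℝ) < 1/t)]
                calc (1/t) * ‖q - p‖ ≤ (1/t) * R := by
                      apply mul_le_mul_of_nonneg_left hqd (by positivity)
                  _ = R / t := by ring
                  _ ≤ ρ/2 := htRρ
              · rw [norm_smul, Real.norm_eq_abs, abs_of_pos (by positivity : (0:ℝ) < ρ/2),
                  hne₀, mul_one]
          _ = ρ := by ring
      -- inner product lower bound
      have hg1 : ‖gradient u q‖ ≤ 1 := (hsp q).le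
      have hlow : u q - u 0 ≤ ⟪gradient u q, q⟫ := grad_lower u hconv hC2 q
      have hinq : ⟪gradient u q, q⟫ = t * ⟪gradient u q, x'⟫ := by
        nth_rewrite 2 [hqx']
        rw [real_inner_smul_right]
      have hux' : u (t • x) - t * ρ ≤ u q := by
        have := lip u hC2 hsp (t • x) q
        have hnn : ‖t • x - q‖ = t * ‖x - x'‖ := by
          rw [hqx', ← smul_sub, norm_smul, Real.norm_eq_abs, abs_of_pos htpos]
        rw [hnn] at this
        have hxx' : ‖x - x'‖ ≤ ρ := by rw [norm_sub_rev]; exact hdist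
        nlinarith
      have hVx : V x - ρ < (u (t • x) - u 0)/t := ht1
      have hx'in : V x - 2*ρ ≤ ⟪gradient u q, x'⟫ := by
        have h1 : (u q - u 0)/t ≤ ⟪gradient u q, x'⟫ := by
          rw [div_le_iff₀ htpos]
          rw [hinq] at hlow
          linarith [hlow]
        have h2 : (u (t • x) - u 0)/t - ρ ≤ (u q - u 0)/t := by
          have hdiv : (u (t • x) - t * ρ)/t ≤ u q / t :=
            (div_le_div_iff_of_pos_right htpos).mpr hux'
          have e1 : (u (t • x) - t * ρ)/t = u (t • x)/t - ρ := by
            rw [sub_div, mul_comm, mul_div_cancel_right₀ _ htpos.ne']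
          have e2 : (u (t • x) - u 0)/t = u (t • x)/t - u 0/t := sub_div _ _ _
          have e3 : (u q - u 0)/t = u q/t - u 0/t := sub_div _ _ _
          rw [e2, e3]
          rw [e1] at hdiv
          linarith
        linarith
      have hxin : V x - η ≤ ⟪gradient u q, x⟫ := by
        have h1 : ⟪gradient u q, x⟫ = ⟪gradient u q, x'⟫ - ⟪gradient u q, x' - x⟫ := by
          rw [inner_sub_right]
          ring
        have h2 : ⟪gradient u q, x' - x⟫ ≤ ρ := by
          calc ⟪gradient u q, x' - x⟫ ≤ ‖gradient u q‖ * ‖x' - x‖ := real_inner_le_norm _ _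
            _ ≤ 1 * ρ := by
                apply mul_le_mul hg1 hdist (norm_nonneg _) (by norm_num)
            _ = ρ := one_mul _
        rw [h1]
        have : η = 3 * ρ := by rw [hρdef]; ring
        rw [this]
        linarith
      exact hclaim (gradient u q) (P_grad u V hconv hC2 hV q) hxin
    have := ball_bound u hn1 hconv hC2 hsp heq ε hε hε1 p R hR hball
    rw [hRdef] at this
    linarith
  -- Step 3: use the unit maximizer to produce y
  obtain ⟨ξ, hP, hx, hξ⟩ := H
  refine ⟨x + δ • ξ, ?_, ?_⟩
  · have hnorm : ‖x - (x + δ • ξ)‖ = δ := by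
      have : x - (x + δ • ξ) = -(δ • ξ) := by abel
      rw [this, norm_neg, norm_smul, Real.norm_eq_abs, abs_of_pos hδ, hξ, mul_one]
    have hVy_le : V (x + δ • ξ) ≤ V x + δ := by
      have h1 := V_lip u V hC2 hsp hV (x + δ • ξ) x
      have h2 : ‖x + δ • ξ - x‖ = δ := by
        have : x + δ • ξ - x = δ • ξ := by abel
        rw [this, norm_smul, Real.norm_eq_abs, abs_of_pos hδ, hξ, mul_one]
      rw [h2] at h1
      linarith
    have hVy_ge : V x + δ ≤ V (x + δ • ξ) := by
      have h1 := hP (x + δ • ξ)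
      rw [inner_add_right, real_inner_smul_right, real_inner_self_eq_norm_sq, hξ, hx] at h1
      simpa using h1
    have hVy : V (x + δ • ξ) = V x + δ := le_antisymm hVy_le hVy_ge
    rw [hVy, hnorm]
    have : V x - (V x + δ) = -δ := by ring
    rw [this, abs_neg, abs_of_pos hδ]
  · have : x - (x + δ • ξ) = -(δ • ξ) := by abel
    rw [this, norm_neg, norm_smul, Real.norm_eq_abs, abs_of_pos hδ, hξ, mul_one]
end
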